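/- arXiv:1001.4534 — 3 statements merged into one kernel-verified Lean document; each statement's English description precedes it below -/
import Mathlib

section
/- For a prime p, if n ≡ 0 (mod p) then (1/|SL(2,p)|) · Σ_{γ ∈ SL(2,p)} c_p(d_γ − n) = −1/(p+1), where d_γ denotes the lower-right entry of γ. -/
open Complex Real

/-- The Ramanujan sum `c_p(x) = Σ_{(a,p)=1} e(a x / p)`. -/
noncomputable def ramanujanSum (p : ℕ) [NeZero p] (x : ZMod p) : ℂ :=
  ∑ a : (ZMod p)ˣ, Complex.exp (2 * π * I * (((a : ZMod p).val : ℂ) * (x.val : ℂ)) / p)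

section helpers
variable (p : ℕ) [Fact p.Prime]

lemma zeta_pow_p (m : ℕ) :
    Complex.exp (2 * π * I / p) ^ m = Complex.exp (2 * π * I / p) ^ (m % p) :=
  pow_eq_pow_mod m ((Complex.isPrimitiveRoot_exp p (Fact.out (p := p.Prime)).ne_zero).pow_eq_one)

lemma sum_zeta_pow_val : ∑ z : ZMod p, Complex.exp (2 * π * I / p) ^ z.val = 0 := by
  have h0 : p ≠ 0 := (Fact.out (p := p.Prime)).ne_zero
  haveI : NeZero p := ⟨h0⟩
  rw [show (∑ z : ZMod p, Complex.exp (2 * π * I / p) ^ z.val) =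
      ∑ k ∈ Finset.range p, Complex.exp (2 * π * I / p) ^ k from
    Finset.sum_nbij' (fun z => z.val) (fun k => (k : ZMod p))
      (fun z _ => Finset.mem_range.2 z.val_lt)
      (fun k _ => Finset.mem_univ _)
      (fun z _ => ZMod.natCast_rightInverse z)
      (fun k hk => ZMod.val_cast_of_lt (Finset.mem_range.1 hk))
      (fun _ _ => rfl)]
  exact (Complex.isPrimitiveRoot_exp p h0).geom_sum_eq_zero (Fact.out (p := p.Prime)).one_lt

lemma ramanujanSum_eq (x : ZMod p) :
    ramanujanSum p x = if x = 0 then ((p - 1 : ℕ) : ℂ) else -1 := by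
  have h0 : p ≠ 0 := (Fact.out (p := p.Prime)).ne_zero
  haveI : NeZero p := ⟨h0⟩
  set ζ := Complex.exp (2 * π * I / p) with hζ
  have key : ramanujanSum p x = ∑ a : (ZMod p)ˣ, ζ ^ ((a : ZMod p) * x).val := by
    unfold ramanujanSum
    refine Finset.sum_congr rfl fun a _ => ?_
    have hm : ∀ m : ℕ, Complex.exp (2 * π * I * (m : ℂ) / p) = ζ ^ m := fun m => by
      rw [hζ, ← Complex.exp_nat_mul]; congr 1; ring
    rw [ZMod.val_mul, ← zeta_pow_p, ← Nat.cast_mul, hm]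
  rw [key]
  split_ifs with hx
  · subst hx
    simp [ZMod.val_zero, Finset.card_univ, ZMod.card_units, Nat.totient_prime (Fact.out (p := p.Prime))]
  · have hsum : ∑ a : (ZMod p)ˣ, ζ ^ ((a : ZMod p) * x).val
        = ∑ u : (ZMod p)ˣ, ζ ^ (u : ZMod p).val := by
      exact Equiv.sum_comp (Equiv.mulRight (Units.mk0 x hx)) (fun u => ζ ^ (u : ZMod p).val)
    rw [hsum]
    have herase : ∑ u : (ZMod p)ˣ, ζ ^ (u : ZMod p).val
        = ∑ z ∈ Finset.univ.erase (0 : ZMod p), ζ ^ z.val := by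
      rw [Finset.sum_subtype (p := fun z : ZMod p => z ≠ 0) (Finset.univ.erase (0 : ZMod p))
        (fun z => by simp [Finset.mem_erase]) (fun z => ζ ^ z.val)]
      have := Equiv.sum_comp (unitsEquivNeZero (G₀ := ZMod p))
        (fun z : {z : ZMod p // z ≠ 0} => ζ ^ (z : ZMod p).val)
      rw [← this]
      rfl
    have htot := Finset.add_sum_erase Finset.univ (fun z : ZMod p => ζ ^ z.val)
      (Finset.mem_univ 0)
    rw [sum_zeta_pow_val] at htot
    simp only [ZMod.val_zero, pow_zero] at htot
    rw [herase]
    linear_combination htot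
end helpers

set_option maxRecDepth 10000

section fibers
set_option linter.unusedSectionVars false
variable {R : Type*} [CommRing R]

lemma e00 (a b c d : R) : !![a,b;c,d] 0 0 = a := by simp
lemma e01 (a b c d : R) : !![a,b;c,d] 0 1 = b := by simp
lemma e10 (a b c d : R) : !![a,b;c,d] 1 0 = c := by simp
lemma e11 (a b c d : R) : !![a,b;c,d] 1 1 = d := by simp

variable (p : ℕ) [Fact p.Prime]

local notation "SL2" => Matrix.SpecialLinearGroup (Fin 2) (ZMod p)

def fiberZeroEquiv :
    {γ : SL2 // (γ : Matrix (Fin 2) (Fin 2) (ZMod p)) 1 1 = 0} ≃ ZMod p × (ZMod p)ˣ where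
  toFun γ := (((γ : SL2) : Matrix (Fin 2) (Fin 2) (ZMod p)) 0 0,
    Units.mk0 (((γ : SL2) : Matrix (Fin 2) (Fin 2) (ZMod p)) 0 1) (fun hb => by
      have hdet := γ.1.2
      rw [Matrix.det_fin_two, γ.2, hb] at hdet
      simp at hdet))
  invFun x := ⟨⟨!![x.1, (x.2 : ZMod p); -((x.2⁻¹ : (ZMod p)ˣ) : ZMod p), 0], by
      rw [Matrix.det_fin_two, e00, e01, e10, e11, Units.val_inv_eq_inv_val]
      have hb := x.2.ne_zero
      field_simp
      ring⟩, e11 _ _ _ _⟩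
  left_inv γ := by
    have hdet := γ.1.2
    rw [Matrix.det_fin_two, γ.2, mul_zero, zero_sub] at hdet
    have hb : ((γ : SL2) : Matrix (Fin 2) (Fin 2) (ZMod p)) 0 1 ≠ 0 := fun h => by
      rw [h] at hdet; simp at hdet
    apply Subtype.ext
    apply Subtype.ext
    dsimp only
    ext i j
    fin_cases i <;> fin_cases j <;> dsimp only <;> simp only [Fin.zero_eta, Fin.mk_one]
    · exact e00 _ _ _ _
    · exact (e01 _ _ _ _).trans (Units.val_mk0 _)
    · rw [e10, Units.val_inv_eq_inv_val, Units.val_mk0]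
      field_simp
      linear_combination hdet
    · exact (e11 _ _ _ _).trans γ.2.symm
  right_inv x := by
    refine Prod.ext ?_ (Units.ext ?_)
    · exact e00 _ _ _ _
    · simp only [Units.val_mk0]
      exact e01 _ _ _ _

def fiberNeEquiv (d : ZMod p) (hd : d ≠ 0) :
    {γ : SL2 // (γ : Matrix (Fin 2) (Fin 2) (ZMod p)) 1 1 = d} ≃ ZMod p × ZMod p where
  toFun γ := (((γ : SL2) : Matrix (Fin 2) (Fin 2) (ZMod p)) 0 1,
    ((γ : SL2) : Matrix (Fin 2) (Fin 2) (ZMod p)) 1 0)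
  invFun x := ⟨⟨!![(1 + x.1 * x.2) * d⁻¹, x.1; x.2, d], by
      rw [Matrix.det_fin_two, e00, e01, e10, e11]
      field_simp
      ring⟩, e11 _ _ _ _⟩
  left_inv γ := by
    have hdet := γ.1.2
    rw [Matrix.det_fin_two, γ.2] at hdet
    apply Subtype.ext
    apply Subtype.ext
    dsimp only
    ext i j
    fin_cases i <;> fin_cases j <;> dsimp only <;> simp only [Fin.zero_eta, Fin.mk_one]
    · rw [e00]
      field_simp
      linear_combination -hdet
    · exact e01 _ _ _ _
    · exact e10 _ _ _ _
    · exact (e11 _ _ _ _).trans γ.2.symm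
  right_inv x := Prod.ext (e01 _ _ _ _) (e10 _ _ _ _)
end fibers

section main
variable (p : ℕ) [Fact p.Prime]

local notation "SL2" => Matrix.SpecialLinearGroup (Fin 2) (ZMod p)

lemma card_fiber_zero :
    Fintype.card {γ : SL2 // (γ : Matrix (Fin 2) (Fin 2) (ZMod p)) 1 1 = 0} = p * (p - 1) := by
  rw [Fintype.card_congr (fiberZeroEquiv p), Fintype.card_prod, ZMod.card, ZMod.card_units]

lemma card_fiber_ne (d : ZMod p) (hd : d ≠ 0) :
    Fintype.card {γ : SL2 // (γ : Matrix (Fin 2) (Fin 2) (ZMod p)) 1 1 = d} = p * p := by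
  rw [Fintype.card_congr (fiberNeEquiv p d hd), Fintype.card_prod, ZMod.card]

lemma card_SL2 : Fintype.card SL2 = p * (p - 1) + (p - 1) * (p * p) := by
  have h1 : Fintype.card SL2 =
      ∑ d : ZMod p, Fintype.card
        {γ : SL2 // (γ : Matrix (Fin 2) (Fin 2) (ZMod p)) 1 1 = d} :=
    (Fintype.card_congr (Equiv.sigmaFiberEquiv
      (fun γ : SL2 => (γ : Matrix (Fin 2) (Fin 2) (ZMod p)) 1 1)).symm).trans
      Fintype.card_sigma
  rw [h1, ← Finset.add_sum_erase _ _ (Finset.mem_univ (0 : ZMod p)), card_fiber_zero,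
    Finset.sum_congr rfl (fun d hd => card_fiber_ne p d (Finset.mem_erase.1 hd).1),
    Finset.sum_const, Finset.card_erase_of_mem (Finset.mem_univ _), Finset.card_univ, ZMod.card,
    smul_eq_mul]

lemma sum_SL2 :
    ∑ γ : SL2, ramanujanSum p ((γ : Matrix (Fin 2) (Fin 2) (ZMod p)) 1 1)
      = -((p : ℂ) * ((p : ℂ) - 1)) := by
  have hp := Fact.out (p := p.Prime)
  rw [← Fintype.sum_fiberwise (fun γ : SL2 => (γ : Matrix (Fin 2) (Fin 2) (ZMod p)) 1 1)
    (fun γ : SL2 => ramanujanSum p ((γ : Matrix (Fin 2) (Fin 2) (ZMod p)) 1 1))]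
  have hinner : ∀ d : ZMod p,
      (∑ γ : {γ : SL2 // (γ : Matrix (Fin 2) (Fin 2) (ZMod p)) 1 1 = d},
        ramanujanSum p (((γ : SL2) : Matrix (Fin 2) (Fin 2) (ZMod p)) 1 1))
      = (Fintype.card {γ : SL2 // (γ : Matrix (Fin 2) (Fin 2) (ZMod p)) 1 1 = d} : ℂ)
          * ramanujanSum p d := by
    intro d
    rw [Finset.sum_congr rfl (fun γ _ => by rw [γ.2]), Finset.sum_const, Finset.card_univ,
      nsmul_eq_mul]
  rw [Finset.sum_congr rfl (fun d _ => hinner d),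
    ← Finset.add_sum_erase _ _ (Finset.mem_univ (0 : ZMod p)), card_fiber_zero,
    ramanujanSum_eq, if_pos rfl,
    Finset.sum_congr rfl (fun d hd => by
      rw [card_fiber_ne p d (Finset.mem_erase.1 hd).1, ramanujanSum_eq,
        if_neg (Finset.mem_erase.1 hd).1]),
    Finset.sum_const, Finset.card_erase_of_mem (Finset.mem_univ _), Finset.card_univ, ZMod.card,
    nsmul_eq_mul]
  push_cast [Nat.cast_sub hp.one_le]
  ring
end main


theorem sl2_ramanujan_average_zero (p : ℕ) [Fact p.Prime] (n : ZMod p) (hn : n = 0) :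
    (1 / (Fintype.card (Matrix.SpecialLinearGroup (Fin 2) (ZMod p)) : ℂ)) *
      ∑ γ : Matrix.SpecialLinearGroup (Fin 2) (ZMod p),
        ramanujanSum p ((γ : Matrix (Fin 2) (Fin 2) (ZMod p)) 1 1 - n)
      = -(1 / ((p : ℂ) + 1)) := by
  have hp := Fact.out (p := p.Prime)
  subst hn
  simp only [sub_zero]
  rw [sum_SL2, card_SL2]
  have hq0 : (p : ℂ) ≠ 0 := Nat.cast_ne_zero.2 hp.ne_zero
  have hq1 : (p : ℂ) - 1 ≠ 0 := sub_ne_zero.2 (by exact_mod_cast hp.one_lt.ne')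
  have hq2 : (p : ℂ) + 1 ≠ 0 := by
    have : ((p + 1 : ℕ) : ℂ) ≠ 0 := Nat.cast_ne_zero.2 (Nat.succ_ne_zero p)
    push_cast at this
    exact this
  push_cast [Nat.cast_sub hp.one_le]
  have hden : (p:ℂ) * ((p:ℂ) - 1) + ((p:ℂ) - 1) * ((p:ℂ) * (p:ℂ))
      = (p:ℂ) * ((p:ℂ) - 1) * ((p:ℂ) + 1) := by ring
  rw [hden]
  field_simp
end

section
/- Let Γ'(2) = [Γ(2), Γ(2)] be the commutator subgroup of the free group Γ(2) = ⟨A, B⟩ ≤ SL(2,ℤ), where A = ((1,2),(0,1)) and B = ((1,0),(2,1)). Then every element of Γ'(2) other than the identity has trace different from ±2; equivalently, Γ'(2) contains no nontrivial parabolic elements. -/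
open Matrix

/-- The generator `A = [[1,2],[0,1]]` of `Γ(2)`. -/
def genA : Matrix.SpecialLinearGroup (Fin 2) ℤ := ⟨!![1, 2; 0, 1], by decide⟩

/-- The generator `B = [[1,0],[2,1]]` of `Γ(2)`. -/
def genB : Matrix.SpecialLinearGroup (Fin 2) ℤ := ⟨!![1, 0; 2, 1], by decide⟩

/-- `Γ(2) = ⟨A, B⟩`. -/
def GammaTwo : Subgroup (Matrix.SpecialLinearGroup (Fin 2) ℤ) :=
  Subgroup.closure {genA, genB}

namespace NoParab
abbrev SL2 := Matrix.SpecialLinearGroup (Fin 2) ℤ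
abbrev V2 := {v : Fin 2 → ℤ // v ≠ 0}

instance : MulAction SL2 V2 where
  smul g v := ⟨g.1.mulVec v.1, by
    intro h
    have h2 : (g⁻¹).1.mulVec (g.1.mulVec v.1) = 0 := by rw [h]; simp
    rw [Matrix.mulVec_mulVec, ← Matrix.SpecialLinearGroup.coe_mul, inv_mul_cancel g] at h2
    simp at h2
    exact v.2 h2⟩
  one_smul v := by ext1; simp [HSMul.hSMul]
  mul_smul g h v := by
    ext1
    show (g*h).1.mulVec v.1 = g.1.mulVec (h.1.mulVec v.1)
    rw [Matrix.SpecialLinearGroup.coe_mul, Matrix.mulVec_mulVec]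

lemma smul_coe (g : SL2) (v : V2) : (g • v).1 = g.1.mulVec v.1 := rfl

def gens : Bool → SL2 := fun b => if b then genB else genA

@[simp] lemma gens_false : gens false = genA := rfl
@[simp] lemma gens_true : gens true = genB := rfl

def pp : FreeGroup Bool →* SL2 := FreeGroup.lift gens

lemma genA_inv : genA⁻¹ = (⟨!![1, -2; 0, 1], by decide⟩ : SL2) := by
  apply inv_eq_of_mul_eq_one_right
  refine Subtype.ext ?_; show genA.1 * !![1, -2; 0, 1] = 1
  ext i j
  fin_cases i <;> fin_cases j <;>
    simp [genA, Matrix.SpecialLinearGroup.coe_mul, Matrix.mul_apply, Fin.sum_univ_two]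

lemma genB_inv : genB⁻¹ = (⟨!![1, 0; -2, 1], by decide⟩ : SL2) := by
  apply inv_eq_of_mul_eq_one_right
  refine Subtype.ext ?_; show genB.1 * !![1, 0; -2, 1] = 1
  ext i j
  fin_cases i <;> fin_cases j <;>
    simp [genB, Matrix.SpecialLinearGroup.coe_mul, Matrix.mul_apply, Fin.sum_univ_two]

lemma nz (v : V2) : ¬ (v.1 0 = 0 ∧ v.1 1 = 0) := by
  rintro ⟨h0, h1⟩
  apply v.2
  funext i
  fin_cases i <;> assumption

/-- ping-pong sets -/
def X : Bool → Set V2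
  | true => {v | v.1 0 * v.1 1 > v.1 0 * v.1 0 ∨ v.1 0 = 0}
  | false => {v | v.1 1 * v.1 1 ≤ v.1 0 * v.1 1}

def Y : Bool → Set V2
  | true => {v | v.1 0 * v.1 1 ≤ -(v.1 0 * v.1 0) ∧ v.1 0 ≠ 0}
  | false => {v | v.1 0 * v.1 1 < -(v.1 1 * v.1 1)}

lemma mem_X_false (v : V2) : v ∈ X false ↔ v.1 1 * v.1 1 ≤ v.1 0 * v.1 1 := Iff.rfl
lemma mem_X_true (v : V2) : v ∈ X true ↔ (v.1 0 * v.1 1 > v.1 0 * v.1 0 ∨ v.1 0 = 0) := Iff.rfl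
lemma mem_Y_false (v : V2) : v ∈ Y false ↔ v.1 0 * v.1 1 < -(v.1 1 * v.1 1) := Iff.rfl
lemma mem_Y_true (v : V2) : v ∈ Y true ↔ (v.1 0 * v.1 1 ≤ -(v.1 0 * v.1 0) ∧ v.1 0 ≠ 0) := Iff.rfl

lemma mulVec_A (v : Fin 2 → ℤ) :
    (genA.1.mulVec v) 0 = v 0 + 2 * v 1 ∧ (genA.1.mulVec v) 1 = v 1 := by
  constructor <;> simp [genA, Matrix.mulVec, dotProduct, Fin.sum_univ_two] <;> ring_nf

lemma mulVec_Ainv (v : Fin 2 → ℤ) :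
    ((genA⁻¹).1.mulVec v) 0 = v 0 - 2 * v 1 ∧ ((genA⁻¹).1.mulVec v) 1 = v 1 := by
  rw [genA_inv]
  constructor <;> simp [Matrix.mulVec, dotProduct, Fin.sum_univ_two] <;> ring_nf

lemma mulVec_B (v : Fin 2 → ℤ) :
    (genB.1.mulVec v) 0 = v 0 ∧ (genB.1.mulVec v) 1 = v 1 + 2 * v 0 := by
  constructor <;> simp [genB, Matrix.mulVec, dotProduct, Fin.sum_univ_two] <;> ring_nf

lemma mulVec_Binv (v : Fin 2 → ℤ) :
    ((genB⁻¹).1.mulVec v) 0 = v 0 ∧ ((genB⁻¹).1.mulVec v) 1 = v 1 - 2 * v 0 := by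
  rw [genB_inv]
  constructor <;> simp [Matrix.mulVec, dotProduct, Fin.sum_univ_two] <;> ring_nf

theorem pp_injective : Function.Injective pp := by
  apply FreeGroup.injective_lift_of_ping_pong gens X Y
  · -- nonempty
    intro i
    cases i
    · exact ⟨⟨![1, 0], by intro h; simpa using congrFun h 0⟩, by simp [mem_X_false]⟩
    · exact ⟨⟨![0, 1], by intro h; simpa using congrFun h 1⟩, by simp [mem_X_true]⟩
  · -- X pairwise disjoint
    have key : Disjoint (X false) (X true) := by
      rw [Set.disjoint_left]
      rintro v hvf hvt
      rw [mem_X_false] at hvf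
      rw [mem_X_true] at hvt
      rcases hvt with h | h
      · nlinarith [sq_nonneg (v.1 0 - v.1 1)]
      · have h2 := nz v
        rw [h] at hvf
        simp only [zero_mul] at hvf
        exact h2 ⟨h, by nlinarith⟩
    intro i j hij
    cases i <;> cases j <;> simp_all [Disjoint.symm key]
  · -- Y pairwise disjoint
    have key : Disjoint (Y false) (Y true) := by
      rw [Set.disjoint_left]
      rintro v hvf hvt
      rw [mem_Y_false] at hvf
      rw [mem_Y_true] at hvt
      nlinarith [sq_nonneg (v.1 0 + v.1 1), hvt.1]
    intro i j hij
    cases i <;> cases j <;> simp_all [Disjoint.symm key]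
  · -- X i and Y j disjoint
    intro i j
    rw [Set.disjoint_left]
    intro v hx hy
    cases i <;> cases j
    · rw [mem_X_false] at hx; rw [mem_Y_false] at hy
      nlinarith
    · rw [mem_X_false] at hx; rw [mem_Y_true] at hy
      nlinarith [mul_self_pos.mpr hy.2, hy.1]
    · rw [mem_X_true] at hx; rw [mem_Y_false] at hy
      rcases hx with h | h
      · nlinarith
      · rw [h] at hy; simp only [zero_mul] at hy; nlinarith
    · rw [mem_X_true] at hx; rw [mem_Y_true] at hy
      rcases hx with h | h
      · nlinarith [mul_self_pos.mpr hy.2, hy.1]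
      · exact hy.2 h
  · -- a i • (Y i)ᶜ ⊆ X i
    intro i
    rintro w ⟨v, hv, rfl⟩
    cases i
    · rw [Set.mem_compl_iff, mem_Y_false, not_lt] at hv
      rw [gens_false, mem_X_false, smul_coe]
      rcases mulVec_A v.1 with ⟨h0, h1⟩
      rw [h0, h1]
      nlinarith
    · rw [Set.mem_compl_iff, mem_Y_true, not_and_or, not_le, not_not] at hv
      rw [gens_true, mem_X_true, smul_coe]
      rcases mulVec_B v.1 with ⟨h0, h1⟩
      rw [h0, h1]
      rcases hv with h | h
      · left; nlinarith
      · right; exact h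
  · -- a⁻¹ i • (X i)ᶜ ⊆ Y i
    intro i
    rintro w ⟨v, hv, rfl⟩
    cases i
    · rw [Set.mem_compl_iff, mem_X_false, not_le] at hv
      rw [Pi.inv_apply, gens_false, mem_Y_false, smul_coe]
      rcases mulVec_Ainv v.1 with ⟨h0, h1⟩
      rw [h0, h1]
      nlinarith
    · rw [Set.mem_compl_iff, mem_X_true, not_or, not_lt] at hv
      rw [Pi.inv_apply, gens_true, mem_Y_true, smul_coe]
      rcases mulVec_Binv v.1 with ⟨h0, h1⟩
      rw [h0, h1]
      exact ⟨by nlinarith [hv.1], hv.2⟩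

/-! ### Group-theoretic plumbing -/

lemma genA_mem : genA ∈ GammaTwo := Subgroup.subset_closure (by simp)
lemma genB_mem : genB ∈ GammaTwo := Subgroup.subset_closure (by simp)

lemma pp_range : pp.range = GammaTwo := by
  rw [pp, FreeGroup.range_lift_eq_closure]
  congr 1
  ext g
  simp only [Set.mem_range, GammaTwo, Set.mem_insert_iff, Set.mem_singleton_iff]
  constructor
  · rintro ⟨b, rfl⟩; cases b <;> simp [gens]
  · rintro (rfl | rfl)
    · exact ⟨false, rfl⟩
    · exact ⟨true, rfl⟩

abbrev FB := FreeGroup Bool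
abbrev commFB : Subgroup FB := ⁅(⊤ : Subgroup FB), (⊤ : Subgroup FB)⁆

lemma repr_comm (γ : SL2) (hγ : γ ∈ ⁅GammaTwo, GammaTwo⁆) :
    ∃ w : FB, w ∈ commFB ∧ pp w = γ := by
  have h1 : ⁅GammaTwo, GammaTwo⁆ = Subgroup.map pp commFB := by
    rw [Subgroup.map_commutator, ← MonoidHom.range_eq_map, pp_range]
  rw [h1, Subgroup.mem_map] at hγ
  obtain ⟨w, hw, hpw⟩ := hγ
  exact ⟨w, hw, hpw⟩

/-- conjugation by members of `GammaTwo` preserves the commutator subgroup -/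
lemma conj_mem (h γ : SL2) (hh : h ∈ GammaTwo) (hγ : γ ∈ ⁅GammaTwo, GammaTwo⁆) :
    h * γ * h⁻¹ ∈ ⁅GammaTwo, GammaTwo⁆ := by
  have hmap : Subgroup.map (MulAut.conj h).toMonoidHom GammaTwo = GammaTwo := by
    apply le_antisymm
    · rintro _ ⟨x, hx, rfl⟩
      simp only [MulAut.conj_apply, MulEquiv.coe_toMonoidHom]
      exact Subgroup.mul_mem _ (Subgroup.mul_mem _ hh hx) (Subgroup.inv_mem _ hh)
    · intro x hx
      refine ⟨h⁻¹ * x * h, ?_, ?_⟩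
      · exact Subgroup.mul_mem _ (Subgroup.mul_mem _ (Subgroup.inv_mem _ hh) hx) hh
      · simp only [MulAut.conj_apply, MulEquiv.coe_toMonoidHom]
        group
  have : h * γ * h⁻¹ = (MulAut.conj h).toMonoidHom γ := by
    simp [MulAut.conj_apply]
  rw [this]
  have h2 : (MulAut.conj h).toMonoidHom γ ∈
      Subgroup.map (MulAut.conj h).toMonoidHom ⁅GammaTwo, GammaTwo⁆ :=
    Subgroup.mem_map_of_mem _ hγ
  rwa [Subgroup.map_commutator, hmap] at h2

/-! ### mod 4 congruence -/

def φ4 : SL2 →* Matrix.SpecialLinearGroup (Fin 2) (ZMod 4) :=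
  Matrix.SpecialLinearGroup.map (Int.castRingHom (ZMod 4))

lemma commute_closure {G : Type*} [Group G] (S : Set G)
    (hS : ∀ a ∈ S, ∀ b ∈ S, Commute a b) :
    ∀ x ∈ Subgroup.closure S, ∀ y ∈ Subgroup.closure S, Commute x y := by
  intro x hx
  induction hx using Subgroup.closure_induction with
  | mem a ha =>
    intro y hy
    induction hy using Subgroup.closure_induction with
    | mem b hb => exact hS a ha b hb
    | one => exact Commute.one_right _
    | mul b c _ _ hb hc => exact Commute.mul_right hb hc
    | inv b _ hb => exact Commute.inv_right hb
  | one => exact fun y _ => Commute.one_left _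
  | mul b c _ _ hb hc => exact fun y hy => Commute.mul_left (hb y hy) (hc y hy)
  | inv b _ hb => exact fun y hy => Commute.inv_left (hb y hy)

lemma mem_closure4 (x : FB) : φ4 (pp x) ∈ Subgroup.closure {φ4 genA, φ4 genB} := by
  have hx : pp x ∈ pp.range := ⟨x, rfl⟩
  rw [pp_range, GammaTwo] at hx
  have h2 := Subgroup.mem_map_of_mem φ4 hx
  rw [MonoidHom.map_closure] at h2
  convert h2 using 2
  simp [Set.image_insert_eq]

lemma comm_mod4 (x y : FB) : Commute (φ4 (pp x)) (φ4 (pp y)) := by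
  refine commute_closure _ ?_ _ (mem_closure4 x) _ (mem_closure4 y)
  rintro a (rfl | rfl) b (rfl | rfl)
  · exact Commute.refl _
  · show _ = _
    ext i j
    fin_cases i <;> fin_cases j <;> decide
  · show _ = _
    ext i j
    fin_cases i <;> fin_cases j <;> decide
  · exact Commute.refl _

lemma mod4_one (γ : SL2) (hγ : γ ∈ ⁅GammaTwo, GammaTwo⁆) : φ4 γ = 1 := by
  obtain ⟨w, hw, rfl⟩ := repr_comm γ hγ
  have hker : commFB ≤ (φ4.comp pp).ker := by
    rw [Subgroup.commutator_le]
    intro g1 _ g2 _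
    rw [MonoidHom.mem_ker, map_commutatorElement]
    rw [commutatorElement_eq_one_iff_commute]
    exact comm_mod4 g1 g2
  exact hker hw

lemma mod4_entries (γ : SL2) (hγ : γ ∈ ⁅GammaTwo, GammaTwo⁆) :
    (4:ℤ) ∣ γ.1 0 0 - 1 ∧ (4:ℤ) ∣ γ.1 0 1 ∧ (4:ℤ) ∣ γ.1 1 0 ∧ (4:ℤ) ∣ γ.1 1 1 - 1 := by
  have h := mod4_one γ hγ
  have h' : (φ4 γ).1 = (1 : Matrix (Fin 2) (Fin 2) (ZMod 4)) := by
    rw [h, Matrix.SpecialLinearGroup.coe_one]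
  have he : ∀ i j, ((γ.1 i j : ℤ) : ZMod 4) = (1 : Matrix (Fin 2) (Fin 2) (ZMod 4)) i j := by
    intro i j
    rw [← h']
    rfl
  have hdvd : ∀ a : ℤ, ((a : ZMod 4) = 0) → (4:ℤ) ∣ a := by
    intro a ha
    have := (ZMod.intCast_zmod_eq_zero_iff_dvd a 4).mp ha
    exact_mod_cast this
  refine ⟨?_, ?_, ?_, ?_⟩
  · refine hdvd _ ?_
    have := he 0 0
    rw [Matrix.one_apply_eq] at this
    push_cast
    rw [this]; ring
  · refine hdvd _ ?_
    have := he 0 1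
    rwa [Matrix.one_apply_ne (by decide)] at this
  · refine hdvd _ ?_
    have := he 1 0
    rwa [Matrix.one_apply_ne (by decide)] at this
  · refine hdvd _ ?_
    have := he 1 1
    rw [Matrix.one_apply_eq] at this
    push_cast
    rw [this]; ring

/-! ### exponent-sum homomorphisms -/

def eA : FB →* Multiplicative ℤ :=
  FreeGroup.lift (fun b => if b then (1 : Multiplicative ℤ) else Multiplicative.ofAdd 1)
def eB : FB →* Multiplicative ℤ :=
  FreeGroup.lift (fun b => if b then Multiplicative.ofAdd 1 else (1 : Multiplicative ℤ))

lemma comm_ker (f : FB →* Multiplicative ℤ) (w : FB) (hw : w ∈ commFB) : f w = 1 := by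
  have := Abelianization.commutator_subset_ker f
  rw [commutator_def] at this
  exact this hw

/-- the key cancellation: if `γ` in the commutator subgroup is a `t`-th power of a word with
some exponent sum `1`, then `γ = 1`. -/
lemma eq_one_of_zpow (γ : SL2) (hγ : γ ∈ ⁅GammaTwo, GammaTwo⁆) (u : FB) (t : ℤ)
    (hu : eA u = Multiplicative.ofAdd 1 ∨ eB u = Multiplicative.ofAdd 1)
    (h : γ = pp u ^ t) : γ = 1 := by
  obtain ⟨w, hw, hpw⟩ := repr_comm γ hγ
  have hw2 : w = u ^ t := by
    apply pp_injective
    rw [hpw, h, map_zpow]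
  rcases hu with hu | hu
  · have h1 : eA w = 1 := comm_ker eA w hw
    rw [hw2, map_zpow, hu] at h1
    have ht : t = 0 := by
      have := congrArg Multiplicative.toAdd h1
      simpa using this
    rw [h, ht, zpow_zero]
  · have h1 : eB w = 1 := comm_ker eB w hw
    rw [hw2, map_zpow, hu] at h1
    have ht : t = 0 := by
      have := congrArg Multiplicative.toAdd h1
      simpa using this
    rw [h, ht, zpow_zero]


/-! ### explicit matrices and powers -/

lemma det_entries (γ : SL2) : γ.1 0 0 * γ.1 1 1 - γ.1 0 1 * γ.1 1 0 = 1 := by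
  have := γ.2
  rwa [Matrix.det_fin_two] at this

lemma sl2_ext {g h : SL2} (e00 : g.1 0 0 = h.1 0 0) (e01 : g.1 0 1 = h.1 0 1)
    (e10 : g.1 1 0 = h.1 1 0) (e11 : g.1 1 1 = h.1 1 1) : g = h := by
  apply Subtype.ext
  ext i j
  fin_cases i <;> fin_cases j <;> assumption

lemma zpow_family (F : ℤ → SL2) (hadd : ∀ a b, F a * F b = F (a+b)) (h0 : F 0 = 1) :
    ∀ k : ℤ, (F 1) ^ k = F k := by
  have hinv : (F 1)⁻¹ = F (-1) := by
    apply inv_eq_of_mul_eq_one_right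
    rw [hadd]
    norm_num [h0]
  intro k
  induction k using Int.induction_on with
  | zero => rw [zpow_zero, h0]
  | succ n ih => rw [_root_.zpow_add_one, ih, hadd]
  | pred n ih =>
    have : (-(n:ℤ) - 1) = (-(n:ℤ)) + (-1) := by ring
    rw [_root_.zpow_sub_one, ih, hinv, hadd, ← this]

def Apow (k : ℤ) : SL2 := ⟨!![1, 2*k; 0, 1], by simp [Matrix.det_fin_two_of]⟩
def Bpow (k : ℤ) : SL2 := ⟨!![1, 0; 2*k, 1], by simp [Matrix.det_fin_two_of]⟩
def Cpow (k : ℤ) : SL2 := ⟨!![1+4*k, -(4*k); 4*k, 1-4*k], by simp [Matrix.det_fin_two_of]; ring⟩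
def Dpow (k : ℤ) : SL2 := ⟨!![1+4*k, 4*k; -(4*k), 1-4*k], by simp [Matrix.det_fin_two_of]; ring⟩

lemma Apow_add (a b : ℤ) : Apow a * Apow b = Apow (a+b) := by
  apply sl2_ext <;> rw [Matrix.SpecialLinearGroup.coe_mul] <;>
    simp [Apow, Matrix.SpecialLinearGroup.coe_mul, Matrix.mul_apply, Fin.sum_univ_two] <;> ring

lemma Bpow_add (a b : ℤ) : Bpow a * Bpow b = Bpow (a+b) := by
  apply sl2_ext <;> rw [Matrix.SpecialLinearGroup.coe_mul] <;>
    simp [Bpow, Matrix.SpecialLinearGroup.coe_mul, Matrix.mul_apply, Fin.sum_univ_two] <;> ring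

lemma Cpow_add (a b : ℤ) : Cpow a * Cpow b = Cpow (a+b) := by
  apply sl2_ext <;> rw [Matrix.SpecialLinearGroup.coe_mul] <;>
    simp [Cpow, Matrix.SpecialLinearGroup.coe_mul, Matrix.mul_apply, Fin.sum_univ_two] <;> ring

lemma Dpow_add (a b : ℤ) : Dpow a * Dpow b = Dpow (a+b) := by
  apply sl2_ext <;> rw [Matrix.SpecialLinearGroup.coe_mul] <;>
    simp [Dpow, Matrix.SpecialLinearGroup.coe_mul, Matrix.mul_apply, Fin.sum_univ_two] <;> ring

lemma Apow_zero : Apow 0 = 1 := by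
  apply sl2_ext <;> simp [Apow, Matrix.SpecialLinearGroup.coe_one, Matrix.one_apply]
lemma Bpow_zero : Bpow 0 = 1 := by
  apply sl2_ext <;> simp [Bpow, Matrix.SpecialLinearGroup.coe_one, Matrix.one_apply]
lemma Cpow_zero : Cpow 0 = 1 := by
  apply sl2_ext <;> simp [Cpow, Matrix.SpecialLinearGroup.coe_one, Matrix.one_apply]
lemma Dpow_zero : Dpow 0 = 1 := by
  apply sl2_ext <;> simp [Dpow, Matrix.SpecialLinearGroup.coe_one, Matrix.one_apply]

lemma genA_zpow (k : ℤ) : genA ^ k = Apow k := by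
  have h1 : Apow 1 = genA := by
    apply sl2_ext <;> simp [Apow, genA]
  rw [← h1]
  exact zpow_family Apow Apow_add Apow_zero k

lemma genB_zpow (k : ℤ) : genB ^ k = Bpow k := by
  have h1 : Bpow 1 = genB := by
    apply sl2_ext <;> simp [Bpow, genB]
  rw [← h1]
  exact zpow_family Bpow Bpow_add Bpow_zero k

lemma C_zpow (k : ℤ) : (genA * genB⁻¹) ^ (2*k) = Cpow k := by
  have h1 : Cpow 1 = (genA * genB⁻¹) * (genA * genB⁻¹) := by
    apply sl2_ext <;> rw [Matrix.SpecialLinearGroup.coe_mul, Matrix.SpecialLinearGroup.coe_mul, genB_inv] <;>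
      simp [Cpow, genA, Matrix.SpecialLinearGroup.coe_mul, Matrix.mul_apply, Fin.sum_univ_two]
  have h2 : (genA * genB⁻¹) ^ (2:ℤ) = Cpow 1 := by
    rw [h1, show (2:ℤ) = 1 + 1 from rfl, _root_.zpow_add, zpow_one]
  rw [_root_.zpow_mul, h2]
  exact zpow_family Cpow Cpow_add Cpow_zero k

lemma D_zpow (k : ℤ) : (genA⁻¹ * genB) ^ (2*k) = Dpow k := by
  have h1 : Dpow 1 = (genA⁻¹ * genB) * (genA⁻¹ * genB) := by
    apply sl2_ext <;> rw [Matrix.SpecialLinearGroup.coe_mul, Matrix.SpecialLinearGroup.coe_mul, genA_inv] <;>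
      simp [Dpow, genB, Matrix.SpecialLinearGroup.coe_mul, Matrix.mul_apply, Fin.sum_univ_two]
  have h2 : (genA⁻¹ * genB) ^ (2:ℤ) = Dpow 1 := by
    rw [h1, show (2:ℤ) = 1 + 1 from rfl, _root_.zpow_add, zpow_one]
  rw [_root_.zpow_mul, h2]
  exact zpow_family Dpow Dpow_add Dpow_zero k

/-! ### action components -/

lemma act_components (γ : SL2) (p q ε : ℤ) (h : γ.1.mulVec ![p,q] = ε • ![p,q]) :
    γ.1 0 0 * p + γ.1 0 1 * q = ε * p ∧ γ.1 1 0 * p + γ.1 1 1 * q = ε * q := by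
  constructor
  · have h0 := congrFun h 0
    simp [Matrix.mulVec, dotProduct, Fin.sum_univ_two] at h0
    linarith
  · have h1 := congrFun h 1
    simp [Matrix.mulVec, dotProduct, Fin.sum_univ_two] at h1
    linarith

lemma act_build (γ : SL2) (p q ε : ℤ) (h0 : γ.1 0 0 * p + γ.1 0 1 * q = ε * p)
    (h1 : γ.1 1 0 * p + γ.1 1 1 * q = ε * q) : γ.1.mulVec ![p,q] = ε • ![p,q] := by
  funext i
  fin_cases i <;> simp [Matrix.mulVec, dotProduct, Fin.sum_univ_two] <;> linarith

lemma conj_act (h γ : SL2) (v w : Fin 2 → ℤ) (ε : ℤ)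
    (h1 : γ.1.mulVec v = ε • v) (h2 : h.1.mulVec v = w) :
    (h * γ * h⁻¹).1.mulVec w = ε • w := by
  have e1 : (h * γ * h⁻¹).1 = h.1 * γ.1 * (h⁻¹).1 := by
    simp [Matrix.SpecialLinearGroup.coe_mul]
  rw [e1, ← h2, Matrix.mulVec_mulVec]
  have e3 : (h⁻¹).1 * h.1 = 1 := by
    rw [← Matrix.SpecialLinearGroup.coe_mul, inv_mul_cancel h, Matrix.SpecialLinearGroup.coe_one]
  have e2 : h.1 * γ.1 * (h⁻¹).1 * h.1 = h.1 * γ.1 := by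
    rw [mul_assoc (h.1 * γ.1), e3, mul_one]
  rw [e2, ← Matrix.mulVec_mulVec, h1, Matrix.mulVec_smul, h2]


/-! ### words for pp -/

lemma pp_of_false : pp (FreeGroup.of false) = genA := by simp [pp, gens]
lemma pp_of_true : pp (FreeGroup.of true) = genB := by simp [pp, gens]

lemma eA_of_false : eA (FreeGroup.of false) = Multiplicative.ofAdd 1 := by simp [eA]
lemma eB_of_true : eB (FreeGroup.of true) = Multiplicative.ofAdd 1 := by simp [eB]

lemma eA_C : eA (FreeGroup.of false * (FreeGroup.of true)⁻¹) = Multiplicative.ofAdd 1 := by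
  simp [eA]
lemma eB_D : eB ((FreeGroup.of false)⁻¹ * FreeGroup.of true) = Multiplicative.ofAdd 1 := by
  simp [eB]

lemma pp_C : pp (FreeGroup.of false * (FreeGroup.of true)⁻¹) = genA * genB⁻¹ := by
  simp [pp, gens]
lemma pp_D : pp ((FreeGroup.of false)⁻¹ * FreeGroup.of true) = genA⁻¹ * genB := by
  simp [pp, gens]


lemma vec2_ext {v w : Fin 2 → ℤ} (h0 : v 0 = w 0) (h1 : v 1 = w 1) : v = w :=
  funext fun i => by fin_cases i <;> assumption

/-! ### the main reduction -/

lemma main (n : ℕ) : ∀ γ : SL2, γ ∈ ⁅GammaTwo, GammaTwo⁆ → ∀ ε : ℤ, (ε = 1 ∨ ε = -1) →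
    ∀ p q : ℤ, ¬(p = 0 ∧ q = 0) → p.natAbs + q.natAbs ≤ n →
    γ.1.mulVec ![p, q] = ε • ![p, q] → γ = 1 := by
  induction n using Nat.strong_induction_on with
  | _ n IH =>
  intro γ hγ ε hε p q hpq hn hact
  obtain ⟨h0, h1⟩ := act_components γ p q ε hact
  obtain ⟨m00, m01, m10, m11⟩ := mod4_entries γ hγ
  have hdet := det_entries γ
  by_cases hq : q = 0
  · -- fixed vector (p, 0)
    have hp : p ≠ 0 := fun h => hpq ⟨h, hq⟩
    rw [hq] at h0 h1
    have ha : γ.1 0 0 = ε := by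
      have h : (γ.1 0 0 - ε) * p = 0 := by ring_nf; linarith
      rcases mul_eq_zero.mp h with h | h
      · linarith
      · exact absurd h hp
    have hc : γ.1 1 0 = 0 := by
      have h : γ.1 1 0 * p = 0 := by linarith
      rcases mul_eq_zero.mp h with h | h
      · exact h
      · exact absurd h hp
    rcases hε with rfl | rfl
    · -- ε = 1 : γ = A^(2m)
      obtain ⟨m, hm⟩ := m01
      have hd : γ.1 1 1 = 1 := by
        rw [ha, hc] at hdet
        linarith
      refine eq_one_of_zpow γ hγ (FreeGroup.of false) (2*m) (Or.inl eA_of_false) ?_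
      rw [pp_of_false, genA_zpow]
      apply sl2_ext
      · rw [ha]; simp [Apow]
      · rw [hm]; simp [Apow]; ring
      · rw [hc]; simp [Apow]
      · rw [hd]; simp [Apow]
    · -- ε = -1 : contradiction mod 4
      rw [ha] at m00
      omega
  · by_cases hp : p = 0
    · -- fixed vector (0, q)
      rw [hp] at h0 h1
      have hb : γ.1 0 1 = 0 := by
        have h : γ.1 0 1 * q = 0 := by ring_nf; linarith
        rcases mul_eq_zero.mp h with h | h
        · exact h
        · exact absurd h hq
      have hd : γ.1 1 1 = ε := by
        have h : (γ.1 1 1 - ε) * q = 0 := by ring_nf; linarith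
        rcases mul_eq_zero.mp h with h | h
        · linarith
        · exact absurd h hq
      rcases hε with rfl | rfl
      · obtain ⟨m, hm⟩ := m10
        have ha : γ.1 0 0 = 1 := by
          rw [hb, hd] at hdet
          linarith
        refine eq_one_of_zpow γ hγ (FreeGroup.of true) (2*m) (Or.inr eB_of_true) ?_
        rw [pp_of_true, genB_zpow]
        apply sl2_ext
        · rw [ha]; simp [Bpow]
        · rw [hb]; simp [Bpow]
        · rw [hm]; simp [Bpow]; ring
        · rw [hd]; simp [Bpow]
      · rw [hd] at m11
        omega
    · by_cases hpq1 : p = q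
      · -- fixed vector (p, p)
        subst hpq1
        have hab : γ.1 0 0 + γ.1 0 1 = ε := by
          have h : (γ.1 0 0 + γ.1 0 1 - ε) * p = 0 := by ring_nf; linarith
          rcases mul_eq_zero.mp h with h | h
          · linarith
          · exact absurd h hp
        have hcd : γ.1 1 0 + γ.1 1 1 = ε := by
          have h : (γ.1 1 0 + γ.1 1 1 - ε) * p = 0 := by ring_nf; linarith
          rcases mul_eq_zero.mp h with h | h
          · linarith
          · exact absurd h hp
        rcases hε with rfl | rfl
        · obtain ⟨m, hm⟩ := m01
          have ha : γ.1 0 0 = 1 - γ.1 0 1 := by linarith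
          have hd : γ.1 1 1 = 1 - γ.1 1 0 := by linarith
          have hc : γ.1 1 0 = - γ.1 0 1 := by
            rw [ha, hd] at hdet
            ring_nf at hdet
            linarith
          refine eq_one_of_zpow γ hγ (FreeGroup.of false * (FreeGroup.of true)⁻¹) (2*(-m))
            (Or.inl eA_C) ?_
          rw [pp_C, C_zpow]
          apply sl2_ext
          · rw [ha, hm]; simp [Cpow]; try ring
          · rw [hm]; simp [Cpow]; try ring
          · rw [hc, hm]; simp [Cpow]; try ring
          · rw [hd, hc, hm]; simp [Cpow]; try ring
        · omega
      · by_cases hpq2 : p = -q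
        · -- fixed vector (p, -p)
          have hqp : q = -p := by omega
          subst hqp
          have hab : γ.1 0 0 - γ.1 0 1 = ε := by
            have h : (γ.1 0 0 - γ.1 0 1 - ε) * p = 0 := by ring_nf; linarith
            rcases mul_eq_zero.mp h with h | h
            · linarith
            · exact absurd h hp
          have hcd : γ.1 1 0 - γ.1 1 1 = -ε := by
            have h : (γ.1 1 0 - γ.1 1 1 + ε) * p = 0 := by ring_nf; linarith
            rcases mul_eq_zero.mp h with h | h
            · linarith
            · exact absurd h hp
          rcases hε with rfl | rfl
          · obtain ⟨m, hm⟩ := m01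
            have ha : γ.1 0 0 = 1 + γ.1 0 1 := by linarith
            have hd : γ.1 1 1 = 1 + γ.1 1 0 := by linarith
            have hc : γ.1 1 0 = - γ.1 0 1 := by
              rw [ha, hd] at hdet
              ring_nf at hdet
              linarith
            refine eq_one_of_zpow γ hγ ((FreeGroup.of false)⁻¹ * FreeGroup.of true) (2*m)
              (Or.inr eB_D) ?_
            rw [pp_D, D_zpow]
            apply sl2_ext
            · rw [ha, hm]; simp [Dpow]; try ring
            · rw [hm]; simp [Dpow]; try ring
            · rw [hc, hm]; simp [Dpow]; try ring
            · rw [hd, hc, hm]; simp [Dpow]; try ring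
          · omega
        · -- strict Euclidean step
          have hne : p.natAbs ≠ q.natAbs := by
            intro h
            rcases Int.natAbs_eq_natAbs_iff.mp h with h | h
            · exact hpq1 h
            · exact hpq2 h
          rcases lt_or_gt_of_ne hne with hlt | hgt
          · -- |p| < |q| : use B-moves
            by_cases hs : 0 < p * q
            · -- q' = q - 2p
              have habs : (q - 2*p).natAbs < q.natAbs := by
                rcases mul_pos_iff.mp hs with ⟨h1', h2'⟩ | ⟨h1', h2'⟩ <;> omega
              have hv : (genB⁻¹).1.mulVec ![p, q] = ![p, q - 2*p] := by
                apply vec2_ext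
                · rw [(mulVec_Binv ![p,q]).1]; simp; try ring
                · rw [(mulVec_Binv ![p,q]).2]; simp; try ring
              have hγ' := conj_mem genB⁻¹ γ (Subgroup.inv_mem _ genB_mem) hγ
              have hact' := conj_act genB⁻¹ γ ![p,q] ![p, q - 2*p] ε hact hv
              have hone := IH (p.natAbs + (q - 2*p).natAbs) (by omega)
                (genB⁻¹ * γ * genB⁻¹⁻¹) hγ' ε hε p (q - 2*p) (fun h => hp h.1) le_rfl hact'
              have hG : γ = genB⁻¹⁻¹ * (genB⁻¹ * γ * genB⁻¹⁻¹) * genB⁻¹ := by group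
              rw [hG, hone, mul_one, inv_inv, mul_inv_cancel]
            · have hs' : p * q < 0 := lt_of_le_of_ne (not_lt.mp hs) (mul_ne_zero hp hq)
              have habs : (q + 2*p).natAbs < q.natAbs := by
                rcases mul_neg_iff.mp hs' with ⟨h1', h2'⟩ | ⟨h1', h2'⟩ <;> omega
              have hv : genB.1.mulVec ![p, q] = ![p, q + 2*p] := by
                apply vec2_ext
                · rw [(mulVec_B ![p,q]).1]; simp; try ring
                · rw [(mulVec_B ![p,q]).2]; simp; try ring
              have hγ' := conj_mem genB γ genB_mem hγ
              have hact' := conj_act genB γ ![p,q] ![p, q + 2*p] ε hact hv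
              have hone := IH (p.natAbs + (q + 2*p).natAbs) (by omega)
                (genB * γ * genB⁻¹) hγ' ε hε p (q + 2*p) (fun h => hp h.1) le_rfl hact'
              have hG : γ = genB⁻¹ * (genB * γ * genB⁻¹) * genB := by group
              rw [hG, hone, mul_one, inv_mul_cancel]
          · -- |p| > |q| : use A-moves
            by_cases hs : 0 < p * q
            · have habs : (p - 2*q).natAbs < p.natAbs := by
                rcases mul_pos_iff.mp hs with ⟨h1', h2'⟩ | ⟨h1', h2'⟩ <;> omega
              have hv : (genA⁻¹).1.mulVec ![p, q] = ![p - 2*q, q] := by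
                apply vec2_ext
                · rw [(mulVec_Ainv ![p,q]).1]; simp; try ring
                · rw [(mulVec_Ainv ![p,q]).2]; simp; try ring
              have hγ' := conj_mem genA⁻¹ γ (Subgroup.inv_mem _ genA_mem) hγ
              have hact' := conj_act genA⁻¹ γ ![p,q] ![p - 2*q, q] ε hact hv
              have hone := IH ((p - 2*q).natAbs + q.natAbs) (by omega)
                (genA⁻¹ * γ * genA⁻¹⁻¹) hγ' ε hε (p - 2*q) q (fun h => hq h.2) le_rfl hact'
              have hG : γ = genA⁻¹⁻¹ * (genA⁻¹ * γ * genA⁻¹⁻¹) * genA⁻¹ := by group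
              rw [hG, hone, mul_one, inv_inv, mul_inv_cancel]
            · have hs' : p * q < 0 := lt_of_le_of_ne (not_lt.mp hs) (mul_ne_zero hp hq)
              have habs : (p + 2*q).natAbs < p.natAbs := by
                rcases mul_neg_iff.mp hs' with ⟨h1', h2'⟩ | ⟨h1', h2'⟩ <;> omega
              have hv : genA.1.mulVec ![p, q] = ![p + 2*q, q] := by
                apply vec2_ext
                · rw [(mulVec_A ![p,q]).1]; simp; try ring
                · rw [(mulVec_A ![p,q]).2]; simp; try ring
              have hγ' := conj_mem genA γ genA_mem hγ
              have hact' := conj_act genA γ ![p,q] ![p + 2*q, q] ε hact hv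
              have hone := IH ((p + 2*q).natAbs + q.natAbs) (by omega)
                (genA * γ * genA⁻¹) hγ' ε hε (p + 2*q) q (fun h => hq h.2) le_rfl hact'
              have hG : γ = genA⁻¹ * (genA * γ * genA⁻¹) * genA := by group
              rw [hG, hone, mul_one, inv_mul_cancel]


end NoParab

open NoParab in
theorem commutator_gamma_two_no_parabolics
    (γ : Matrix.SpecialLinearGroup (Fin 2) ℤ)
    (hγ : γ ∈ ⁅GammaTwo, GammaTwo⁆) (hne : γ ≠ 1) :
    Matrix.trace (γ : Matrix (Fin 2) (Fin 2) ℤ) ≠ 2 ∧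
      Matrix.trace (γ : Matrix (Fin 2) (Fin 2) ℤ) ≠ -2 := by
  have hdet := det_entries γ
  constructor
  · intro htr
    rw [Matrix.trace_fin_two] at htr
    apply hne
    by_cases hba : γ.1 0 1 = 0 ∧ γ.1 0 0 = 1
    · refine main (0 + (1:ℤ).natAbs) γ hγ 1 (Or.inl rfl) 0 1 (by simp) (by simp) ?_
      apply act_build
      · rw [hba.1]; ring
      · have : γ.1 1 1 = 1 := by rw [hba.2] at htr; linarith
        rw [this]; ring
    · refine main ((γ.1 0 1).natAbs + (1 - γ.1 0 0).natAbs) γ hγ 1 (Or.inl rfl)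
        (γ.1 0 1) (1 - γ.1 0 0) ?_ le_rfl ?_
      · rintro ⟨hb, ha⟩
        exact hba ⟨hb, by linarith⟩
      · apply act_build
        · ring
        · linear_combination htr - hdet
  · intro htr
    rw [Matrix.trace_fin_two] at htr
    apply hne
    by_cases hba : γ.1 0 1 = 0 ∧ γ.1 0 0 = -1
    · refine main (0 + (1:ℤ).natAbs) γ hγ (-1) (Or.inr rfl) 0 1 (by simp) (by simp) ?_
      apply act_build
      · rw [hba.1]; ring
      · have : γ.1 1 1 = -1 := by rw [hba.2] at htr; linarith
        rw [this]; ring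
    · refine main ((γ.1 0 1).natAbs + (-1 - γ.1 0 0).natAbs) γ hγ (-1) (Or.inr rfl)
        (γ.1 0 1) (-1 - γ.1 0 0) ?_ le_rfl ?_
      · rintro ⟨hb, ha⟩
        exact hba ⟨hb, by linarith⟩
      · apply act_build
        · ring
        · linear_combination - htr - hdet
end

section
/- Let q, q' ≥ 1, gcd(a,q) = gcd(a',q') = 1, N ≥ 1, and σ < 1/4 − log 4 / log N with q, q' < N^{1/2}. Let y = (y₁,y₂), y' = (y₁',y₂') ∈ ℤ² with |y|, |y'| < N^σ, and let β be real with |β| < 2/(Q N^{1/2}) where Q/2 ≤ q, q' < Q. Set θ = a/q + β, θ' = a'/q' + β. If ‖y₁θ − y₁'θ'‖ < 1/(10 N^{1−σ}) and ‖y₂θ − y₂'θ'‖ < 1/(10 N^{1−σ}) (where ‖·‖ denotes distance to the nearest integer), then y₂'y₁ − y₁'y₂ ≡ 0 (mod lcm(q,q')). -/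
open Real

/-- Distance from a real number to the nearest integer. -/
noncomputable def distNearestInt (x : ℝ) : ℝ := |x - round x|

lemma aux_dvd (D M : ℤ) (r : ℕ) (hr : 1 ≤ r) (a : ℤ) (ha : IsCoprime a (r:ℤ)) (β t : ℝ)
    (hid : (D:ℝ) * ((a:ℝ)/r + β) - (M:ℝ) = t)
    (hbound : (r:ℝ) * |t| + (r:ℝ) * |(D:ℝ)| * |β| < 1) : (r:ℤ) ∣ D := by
  have hr0 : (0:ℝ) < r := by exact_mod_cast hr
  have hcast : ((D * a - r * M : ℤ) : ℝ) = (r:ℝ) * t - (r:ℝ) * ((D:ℝ) * β) := by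
    rw [← hid]
    push_cast
    field_simp
    ring
  have habs : |((D * a - r * M : ℤ) : ℝ)| < 1 := by
    rw [hcast]
    calc |(r:ℝ) * t - (r:ℝ) * ((D:ℝ) * β)| ≤ |(r:ℝ)*t| + |(r:ℝ)*((D:ℝ)*β)| := abs_sub _ _
    _ = (r:ℝ)*|t| + (r:ℝ)*|(D:ℝ)| * |β| := by
        rw [abs_mul, abs_mul, abs_mul, abs_of_nonneg hr0.le]; ring
    _ < 1 := hbound
  have hE : D * a - (r:ℤ) * M = 0 := by
    have h' : |D * a - (r:ℤ) * M| < 1 := by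
      have := habs
      rw [← Int.cast_abs] at this
      exact_mod_cast this
    exact Int.abs_lt_one_iff.mp h'
  have hdvd : (r:ℤ) ∣ D * a := ⟨M, by linarith⟩
  exact (ha.symm).dvd_of_dvd_mul_right hdvd

lemma numeric_bound (s A r t d b : ℝ) (hs0 : 0 < s) (hA0 : 0 < A)
    (hr0 : 0 ≤ r) (hrs : r < s) (hA2 : 16 * (A * A) < s)
    (ht : t * (5 * (s * s)) ≤ A * A) (ht0 : 0 ≤ t)
    (hd0 : 0 ≤ d) (hD : d ≤ 2 * (A * A)) (hb0 : 0 ≤ b) (hbs : r * b * s < 2) :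
    r * t + r * d * b < 1 := by
  have hA2' : A * A < s / 16 := by linarith
  have h1 : r * t < 1 / 80 := by
    have e1 : r * t * (5 * (s * s)) ≤ r * (A * A) := by
      have := mul_le_mul_of_nonneg_left ht hr0
      nlinarith
    have e2 : r * (A * A) < s * (s / 16) := by
      have : r * (A * A) ≤ s * (A * A) := mul_le_mul_of_nonneg_right hrs.le (by positivity)
      nlinarith [mul_lt_mul_of_pos_left hA2' hs0]
    nlinarith [mul_pos hs0 hs0]
  have h2 : r * d * b < 1 / 2 := by
    have e3 : r * b * s * d ≤ r * b * s * (2 * (A * A)) :=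
      mul_le_mul_of_nonneg_left hD (by positivity)
    have e4 : r * b * s * (2 * (A * A)) < 2 * (2 * (A * A)) :=
      mul_lt_mul_of_pos_right hbs (by positivity)
    have e5 : r * d * b * s < 4 * (A * A) := by nlinarith
    have e6 : 4 * (A * A) < s / 4 := by linarith
    nlinarith
  linarith

set_option maxHeartbeats 1000000 in
theorem minor_arcs_congruence_lcm
    (N Q σ β : ℝ) (hN : 1 < N) (hσ : σ < 1/4 - Real.log 4 / Real.log N)
    (q q' : ℕ) (hq : 1 ≤ q) (hq' : 1 ≤ q')
    (hqN : (q : ℝ) < Real.sqrt N) (hq'N : (q' : ℝ) < Real.sqrt N)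
    (hQq : Q / 2 ≤ (q : ℝ)) (hqQ : (q : ℝ) < Q)
    (hQq' : Q / 2 ≤ (q' : ℝ)) (hq'Q : (q' : ℝ) < Q)
    (a a' : ℤ) (ha : IsCoprime a (q : ℤ)) (ha' : IsCoprime a' (q' : ℤ))
    (y₁ y₂ y₁' y₂' : ℤ)
    (hy : Real.sqrt ((y₁ : ℝ)^2 + (y₂ : ℝ)^2) < N ^ σ)
    (hy' : Real.sqrt ((y₁' : ℝ)^2 + (y₂' : ℝ)^2) < N ^ σ)
    (hβ : |β| < 2 / (Q * Real.sqrt N))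
    (h1 : distNearestInt ((y₁ : ℝ) * ((a : ℝ) / q + β) - (y₁' : ℝ) * ((a' : ℝ) / q' + β))
        < 1 / (10 * N ^ (1 - σ)))
    (h2 : distNearestInt ((y₂ : ℝ) * ((a : ℝ) / q + β) - (y₂' : ℝ) * ((a' : ℝ) / q' + β))
        < 1 / (10 * N ^ (1 - σ))) :
    (Nat.lcm q q' : ℤ) ∣ (y₂' * y₁ - y₁' * y₂) := by
  have hN0 : (0:ℝ) < N := by linarith
  obtain ⟨s, hs⟩ : ∃ s, s = Real.sqrt N := ⟨_, rfl⟩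
  rw [← hs] at hqN hq'N hβ
  have hs0 : 0 < s := hs ▸ Real.sqrt_pos.mpr hN0
  have hss : s * s = N := hs ▸ Real.mul_self_sqrt hN0.le
  obtain ⟨A, hA⟩ : ∃ A, A = N ^ σ := ⟨_, rfl⟩
  rw [← hA] at hy hy'
  have hA0 : 0 < A := hA ▸ Real.rpow_pos_of_pos hN0 σ
  have hlogN : 0 < Real.log N := Real.log_pos hN
  -- A * 4 < N ^ (1/4)
  have h4 : N ^ (Real.log 4 / Real.log N) = 4 := by
    rw [Real.rpow_def_of_pos hN0, mul_comm, div_mul_cancel₀ _ hlogN.ne']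
    exact Real.exp_log (by norm_num)
  have hA4 : A * 4 < N ^ ((1:ℝ)/4) := by
    have hlt : A < N ^ ((1:ℝ)/4 - Real.log 4 / Real.log N) :=
      hA ▸ Real.rpow_lt_rpow_of_exponent_lt hN hσ
    have he : N ^ ((1:ℝ)/4 - Real.log 4 / Real.log N) * 4 = N ^ ((1:ℝ)/4) := by
      calc N ^ ((1:ℝ)/4 - Real.log 4 / Real.log N) * 4
          = N ^ ((1:ℝ)/4 - Real.log 4 / Real.log N) * N ^ (Real.log 4 / Real.log N) := by
            rw [h4]
      _ = N ^ ((1:ℝ)/4) := by rw [← Real.rpow_add hN0]; congr 1; ring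
    calc A * 4 < N ^ ((1:ℝ)/4 - Real.log 4 / Real.log N) * 4 := by linarith
    _ = N ^ ((1:ℝ)/4) := he
  -- 16 A² < s
  have hq14 : N ^ ((1:ℝ)/4) * N ^ ((1:ℝ)/4) = s := by
    rw [← Real.rpow_add hN0, hs, Real.sqrt_eq_rpow]
    norm_num
  have hA2 : 16 * (A * A) < s := by
    nlinarith [Real.rpow_pos_of_pos hN0 ((1:ℝ)/4)]
  -- N^(1-σ) relation
  have hNA : A * N ^ (1 - σ) = N := by
    rw [hA, ← Real.rpow_add hN0]
    norm_num
  have hNs0 : (0:ℝ) < N ^ (1 - σ) := Real.rpow_pos_of_pos hN0 _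
  obtain ⟨ε, hεdef⟩ : ∃ e, e = A / (10 * N) := ⟨_, rfl⟩
  have hε : 1 / (10 * N ^ (1 - σ)) = ε := by
    rw [hεdef, div_eq_div_iff (by positivity) (by positivity)]
    linear_combination (-10 : ℝ) * hNA
  have hε0 : 0 < ε := by rw [hεdef]; positivity
  rw [hε] at h1 h2
  -- coordinate bounds
  have hcoord : ∀ u v : ℤ, Real.sqrt ((u:ℝ)^2 + (v:ℝ)^2) < A → |(u:ℝ)| < A ∧ |(v:ℝ)| < A := by
    intro u v h
    constructor
    · calc |(u:ℝ)| = Real.sqrt ((u:ℝ)^2) := (Real.sqrt_sq_eq_abs _).symm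
      _ ≤ Real.sqrt ((u:ℝ)^2 + (v:ℝ)^2) := Real.sqrt_le_sqrt (by nlinarith [sq_nonneg (v:ℝ)])
      _ < A := h
    · calc |(v:ℝ)| = Real.sqrt ((v:ℝ)^2) := (Real.sqrt_sq_eq_abs _).symm
      _ ≤ Real.sqrt ((u:ℝ)^2 + (v:ℝ)^2) := Real.sqrt_le_sqrt (by nlinarith [sq_nonneg (u:ℝ)])
      _ < A := h
  obtain ⟨hy1, hy2⟩ := hcoord y₁ y₂ hy
  obtain ⟨hy1', hy2'⟩ := hcoord y₁' y₂' hy'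
  -- β bound
  have hQ0 : 0 < Q := lt_of_le_of_lt (by positivity) hqQ
  have hβs : ∀ r : ℝ, 0 ≤ r → r < Q → r * |β| * s < 2 := by
    intro r hr hrQ
    have hb1 : r * |β| ≤ Q * |β| := mul_le_mul_of_nonneg_right hrQ.le (abs_nonneg _)
    have hb2 : Q * |β| < Q * (2 / (Q * s)) := mul_lt_mul_of_pos_left hβ hQ0
    have hb3 : Q * (2 / (Q * s)) * s = 2 := by field_simp
    nlinarith [abs_nonneg β, hs0]
  -- the two near-integers
  obtain ⟨e₁, he₁⟩ : ∃ x, x = (y₁ : ℝ) * ((a : ℝ) / q + β) - (y₁' : ℝ) * ((a' : ℝ) / q' + β) :=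
    ⟨_, rfl⟩
  obtain ⟨e₂, he₂⟩ : ∃ x, x = (y₂ : ℝ) * ((a : ℝ) / q + β) - (y₂' : ℝ) * ((a' : ℝ) / q' + β) :=
    ⟨_, rfl⟩
  rw [← he₁] at h1
  rw [← he₂] at h2
  set m₁ := round e₁ with hm₁
  set m₂ := round e₂ with hm₂
  have hd1 : |e₁ - m₁| < ε := h1
  have hd2 : |e₂ - m₂| < ε := h2
  obtain ⟨D, hD⟩ : ∃ D : ℤ, D = y₂' * y₁ - y₁' * y₂ := ⟨_, rfl⟩
  rw [← hD]
  -- |D| ≤ 2A²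
  have hDc : (D:ℝ) = (y₂':ℝ) * (y₁:ℝ) - (y₁':ℝ) * (y₂:ℝ) := by rw [hD]; push_cast; ring
  have hDbound : |(D:ℝ)| ≤ 2 * (A * A) := by
    rw [hDc]
    calc |(y₂':ℝ) * y₁ - (y₁':ℝ) * y₂| ≤ |(y₂':ℝ) * y₁| + |(y₁':ℝ) * y₂| := abs_sub _ _
    _ = |(y₂':ℝ)| * |(y₁:ℝ)| + |(y₁':ℝ)| * |(y₂:ℝ)| := by rw [abs_mul, abs_mul]
    _ ≤ 2 * (A * A) := by
        have b1 : |(y₂':ℝ)| * |(y₁:ℝ)| ≤ A * A :=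
          mul_le_mul hy2'.le hy1.le (abs_nonneg _) hA0.le
        have b2 : |(y₁':ℝ)| * |(y₂:ℝ)| ≤ A * A :=
          mul_le_mul hy1'.le hy2.le (abs_nonneg _) hA0.le
        linarith
  -- generic t-bound
  have htb : ∀ u v : ℝ, |u| < A → |v| < A →
      |u * (e₁ - m₁) - v * (e₂ - m₂)| ≤ 2 * (A * ε) := by
    intro u v hu hv
    calc |u * (e₁ - m₁) - v * (e₂ - m₂)| ≤ |u * (e₁ - m₁)| + |v * (e₂ - m₂)| := abs_sub _ _
    _ = |u| * |e₁ - m₁| + |v| * |e₂ - m₂| := by rw [abs_mul, abs_mul]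
    _ ≤ 2 * (A * ε) := by
        have b1 : |u| * |e₁ - m₁| ≤ A * ε := mul_le_mul hu.le hd1.le (abs_nonneg _) hA0.le
        have b2 : |v| * |e₂ - m₂| ≤ A * ε := mul_le_mul hv.le hd2.le (abs_nonneg _) hA0.le
        linarith
  -- numeric final bound, generic in r
  have hnum : ∀ (r : ℕ) (t : ℝ), (r:ℝ) < s → (r:ℝ) < Q → |t| ≤ 2 * (A * ε) →
      (r:ℝ) * |t| + (r:ℝ) * |(D:ℝ)| * |β| < 1 := by
    intro r t hrs hrQ ht
    have hr0 : (0:ℝ) ≤ r := Nat.cast_nonneg r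
    have hεA : 2 * (A * ε) * (5 * N) = A * A := by
      rw [hεdef]; field_simp; ring
    have ht5N : |t| * (5 * N) ≤ A * A := by
      have h := mul_le_mul_of_nonneg_right ht (show (0:ℝ) ≤ 5 * N by positivity)
      rw [hεA] at h
      exact h
    have ht' : |t| * (5 * (s * s)) ≤ A * A := by rw [hss]; exact ht5N
    exact numeric_bound s A r |t| |(D:ℝ)| |β| hs0 hA0 hr0 hrs hA2 ht' (abs_nonneg _)
      (abs_nonneg _) hDbound (abs_nonneg _) (hβs r hr0 hrQ)
  -- divisibility by q
  have hq0 : ((q:ℝ)) ≠ 0 := by positivity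
  have hq'0 : ((q':ℝ)) ≠ 0 := by positivity
  have hdq : (q:ℤ) ∣ D := by
    apply aux_dvd D (y₂' * m₁ - y₁' * m₂) q hq a ha β
      ((y₂':ℝ) * (e₁ - m₁) - (y₁':ℝ) * (e₂ - m₂))
    · rw [he₁, he₂, hDc]
      push_cast
      field_simp
      ring
    · exact hnum q _ hqN hqQ (htb _ _ hy2' hy1')
  have hdq' : (q':ℤ) ∣ D := by
    apply aux_dvd D (y₂ * m₁ - y₁ * m₂) q' hq' a' ha' β
      ((y₂:ℝ) * (e₁ - m₁) - (y₁:ℝ) * (e₂ - m₂))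
    · rw [he₁, he₂, hDc]
      push_cast
      field_simp
      ring
    · exact hnum q' _ hq'N hq'Q (htb _ _ hy2 hy1)
  have hl := Int.coe_lcm_dvd_iff.mpr ⟨hdq, hdq'⟩
  simpa [Int.lcm, Int.natAbs_natCast] using hl
end
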